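/- Fix n ≥ 3, 2 ≤ i ≤ n−1, parameters ε ∈ (0,1), δ > 0, c > 0, and suppose α ≥ 0, β ≥ 0 satisfy the feasibility conditions (i) α ≤ c + 2(−1+ε)β, (ii) (−1+ε)α + c ≤ β, (iii) α ≥ c/(1+δ). Let Δ := δ + 4ε − 2ε², m := cε/Δ, n₀ := c(δ+2ε)/Δ, and let x† be the saddle of cell C_{{i−1,i,i+1}}, i.e. x†_{i−1} = x†_{i+1} = m, x†_i = n₀, x†_k = 0 otherwise. Then: (a) n₀ > c/(2−ε) and m < c/(2−ε); (b) y_i(x†) = n₀ ≥ α, y_{i−1}(x†) = y_{i+1}(x†) = m ≤ β, and y_k(x†) ≤ 0 for all k ∉ {i−1,i,i+1}, where y(x) = Wx + c·1. Hence x† ∈ R_FI^{(i)} := {x : y_i(x) ≥ α, y_{i±1}(x) ≤ β, y_k(x) ≤ 0 for all k ∉ {i−1,i,i+1}}. -/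
import Mathlib

open Matrix

private lemma sum_three' {n : ℕ} (f : Fin n → ℝ) (a b c : Fin n)
    (hab : a ≠ b) (hac : a ≠ c) (hbc : b ≠ c)
    (h0 : ∀ k, k ≠ a → k ≠ b → k ≠ c → f k = 0) :
    ∑ k, f k = f a + f b + f c := by
  have h : ∑ k ∈ ({a,b,c} : Finset (Fin n)), f k = ∑ k, f k :=
    Finset.sum_subset (Finset.subset_univ _) (by
      intro x _ hx
      simp only [Finset.mem_insert, Finset.mem_singleton, not_or] at hx
      exact h0 x hx.1 hx.2.1 hx.2.2)
  rw [← h]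
  rw [Finset.sum_insert (by simp [hab, hac]), Finset.sum_insert (by simp [hbc]),
    Finset.sum_singleton, add_assoc]

set_option maxHeartbeats 1600000 in
/-- Under the feasibility conditions, the saddle point of the
triple-support cell `C_{i−1,i,i+1}` belongs to the forward-invariant set
`R_FI^{(i)}`; moreover `n₀ > c/(2−ε)` and `m < c/(2−ε)`. Indices are 0-based:
`1 ≤ i` and `i + 1 < n` correspond to the 1-based statement `2 ≤ i ≤ n−1`. -/
theorem cstln_saddle_in_forward_invariant_set (n i : ℕ) (hn : 3 ≤ n)
    (hi1 : 1 ≤ i) (hi2 : i + 1 < n)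
    (ε δ c : ℝ) (hε : 0 < ε) (hε1 : ε < 1) (hδ : 0 < δ) (hc : 0 < c)
    (W : Matrix (Fin n) (Fin n) ℝ)
    (hW : ∀ k l : Fin n, W k l =
      if (k : ℕ) = (l : ℕ) then 0
      else if ((k : ℤ) - (l : ℤ)).natAbs = 1 then -1 + ε else -1 - δ)
    (α β : ℝ) (hα : 0 ≤ α) (hβ : 0 ≤ β)
    (h1 : α ≤ c + 2 * (-1 + ε) * β)
    (h2 : (-1 + ε) * α + c ≤ β)
    (h3 : c / (1 + δ) ≤ α)
    (Δ m n₀ : ℝ) (hΔ : Δ = δ + 4 * ε - 2 * ε ^ 2)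
    (hm : m = c * ε / Δ) (hn₀ : n₀ = c * (δ + 2 * ε) / Δ)
    (xd : Fin n → ℝ)
    (hxd : ∀ k : Fin n, xd k =
      if (k : ℕ) = i - 1 ∨ (k : ℕ) = i + 1 then m
      else if (k : ℕ) = i then n₀ else 0)
    (y : Fin n → ℝ) (hy : ∀ k, y k = W.mulVec xd k + c) :
    -- (a)
    (c / (2 - ε) < n₀ ∧ m < c / (2 - ε)) ∧
    -- (b)
    (y ⟨i, by omega⟩ = n₀ ∧ α ≤ y ⟨i, by omega⟩ ∧
     y ⟨i - 1, by omega⟩ = m ∧ y ⟨i - 1, by omega⟩ ≤ β ∧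
     y ⟨i + 1, by omega⟩ = m ∧ y ⟨i + 1, by omega⟩ ≤ β ∧
     ∀ k : Fin n, (k : ℕ) ≠ i - 1 → (k : ℕ) ≠ i → (k : ℕ) ≠ i + 1 → y k ≤ 0) := by
  have hD : (0:ℝ) < Δ := by rw [hΔ]; nlinarith
  have hDne : Δ ≠ 0 := hD.ne'
  have h2ε : (0:ℝ) < 2 - ε := by linarith
  have hmpos : 0 < m := by rw [hm]; exact div_pos (by positivity) hD
  have hn₀pos : 0 < n₀ := by rw [hn₀]; exact div_pos (by positivity) hD
  -- feasibility forces (2-ε)α ≤ c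
  have hαc : (2 - ε) * α ≤ c := by
    rcases le_or_gt (1/2 : ℝ) ε with h | h
    · nlinarith [mul_nonneg hα hε.le, mul_nonneg hβ hε.le, sq_nonneg ε, sq_nonneg (1-ε)]
    · exfalso
      rcases le_or_gt (2*(1-ε)^2) 1 with h' | h'
      · nlinarith [mul_nonneg hα hε.le]
      · nlinarith [mul_nonneg hβ hε.le]
  have ha1 : c / (2 - ε) < n₀ := by
    rw [hn₀, hΔ, div_lt_div_iff₀ h2ε (by nlinarith)]
    nlinarith [mul_pos (mul_pos hc hδ) (sub_pos.mpr hε1)]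
  have ha2 : m < c / (2 - ε) := by
    rw [hm, hΔ, div_lt_div_iff₀ (by nlinarith) h2ε]
    nlinarith [mul_pos hc hδ, mul_pos (mul_pos hc hε) (sub_pos.mpr hε1)]
  have hαle : α ≤ c / (2 - ε) := by rw [le_div_iff₀ h2ε]; linarith
  have hβge : c / (2 - ε) ≤ β := by
    rw [div_le_iff₀ h2ε]
    nlinarith [mul_le_mul_of_nonneg_left hαc (by linarith : (0:ℝ) ≤ 1 - ε)]
  -- the three support indices
  obtain ⟨a, ha⟩ : ∃ a : Fin n, (a : ℕ) = i - 1 := ⟨⟨i-1, by omega⟩, rfl⟩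
  obtain ⟨b, hb⟩ : ∃ b : Fin n, (b : ℕ) = i := ⟨⟨i, by omega⟩, rfl⟩
  obtain ⟨cc, hcc⟩ : ∃ cc : Fin n, (cc : ℕ) = i + 1 := ⟨⟨i+1, by omega⟩, rfl⟩
  have hab : a ≠ b := Fin.ne_of_val_ne (by omega)
  have hac : a ≠ cc := Fin.ne_of_val_ne (by omega)
  have hbc : b ≠ cc := Fin.ne_of_val_ne (by omega)
  have hmv : ∀ k : Fin n, W.mulVec xd k = W k a * m + W k b * n₀ + W k cc * m := by
    intro k
    have h0 : ∀ l : Fin n, l ≠ a → l ≠ b → l ≠ cc → W k l * xd l = 0 := by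
      intro l e1 e2 e3
      have f1 : (l:ℕ) ≠ i - 1 := fun h => e1 (Fin.ext (by omega))
      have f2 : (l:ℕ) ≠ i := fun h => e2 (Fin.ext (by omega))
      have f3 : (l:ℕ) ≠ i + 1 := fun h => e3 (Fin.ext (by omega))
      rw [hxd, if_neg (not_or.mpr ⟨f1, f3⟩), if_neg f2, mul_zero]
    have hs : W.mulVec xd k = ∑ l, W k l * xd l := rfl
    rw [hs, sum_three' _ _ _ _ hab hac hbc h0]
    have xa : xd a = m := by rw [hxd]; exact if_pos (Or.inl ha)
    have xb : xd b = n₀ := by rw [hxd]; rw [if_neg (by omega), if_pos hb]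
    have xcc : xd cc = m := by rw [hxd]; exact if_pos (Or.inr hcc)
    rw [xa, xb, xcc]
  -- weight values
  have hWba : W b a = -1 + ε := by rw [hW, if_neg (by omega), if_pos (by omega)]
  have hWbb : W b b = 0 := by rw [hW, if_pos rfl]
  have hWbcc : W b cc = -1 + ε := by rw [hW, if_neg (by omega), if_pos (by omega)]
  have hWaa : W a a = 0 := by rw [hW, if_pos rfl]
  have hWab : W a b = -1 + ε := by rw [hW, if_neg (by omega), if_pos (by omega)]
  have hWacc : W a cc = -1 - δ := by rw [hW, if_neg (by omega), if_neg (by omega)]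
  have hWcca : W cc a = -1 - δ := by rw [hW, if_neg (by omega), if_neg (by omega)]
  have hWccb : W cc b = -1 + ε := by rw [hW, if_neg (by omega), if_pos (by omega)]
  have hWcccc : W cc cc = 0 := by rw [hW, if_pos rfl]
  have hyb : y b = n₀ := by
    rw [hy, hmv, hWba, hWbb, hWbcc, hm, hn₀]
    field_simp
    rw [hΔ]; ring
  have hya : y a = m := by
    rw [hy, hmv, hWaa, hWab, hWacc, hm, hn₀]
    field_simp
    rw [hΔ]; ring
  have hycc : y cc = m := by
    rw [hy, hmv, hWcca, hWccb, hWcccc, hm, hn₀]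
    field_simp
    rw [hΔ]; ring
  -- key bound for off-support coordinates
  have hkey : ∀ w1 w3 : ℝ, w1 ≤ -1 + ε → w3 ≤ -1 - δ →
      w1 * m + (-1 - δ) * n₀ + w3 * m + c ≤ 0 := by
    intro w1 w3 hw1 hw3
    have h5 : (-1 + ε) * m + (-1 - δ) * n₀ + (-1 - δ) * m + c ≤ 0 := by
      have e : (-1 + ε) * m + (-1 - δ) * n₀ + (-1 - δ) * m + c
          = (-(c * (ε^2 + 3*δ*ε + δ^2))) / Δ := by
        rw [hm, hn₀]
        field_simp
        rw [hΔ]; ring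
      rw [e]
      exact div_nonpos_of_nonpos_of_nonneg (neg_nonpos.mpr (by positivity)) hD.le
    nlinarith [hmpos]
  have ea : (⟨i - 1, by omega⟩ : Fin n) = a := Fin.ext (by simp only [Fin.val_mk]; omega)
  have eb : (⟨i, by omega⟩ : Fin n) = b := Fin.ext (by simp only [Fin.val_mk]; omega)
  have ec : (⟨i + 1, by omega⟩ : Fin n) = cc := Fin.ext (by simp only [Fin.val_mk]; omega)
  rw [ea, eb, ec]
  refine ⟨⟨ha1, ha2⟩, hyb, ?_, hya, ?_, hycc, ?_, ?_⟩
  · rw [hyb]; linarith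
  · rw [hya]; linarith
  · rw [hycc]; linarith
  · intro k hk1 hk2 hk3
    rw [hy, hmv]
    have hkb : W k b = -1 - δ := by rw [hW, if_neg (by omega), if_neg (by omega)]
    rcases (by omega : (k:ℕ) + 1 < i ∨ i + 1 < (k:ℕ)) with hcase | hcase
    · have hkcc : W k cc = -1 - δ := by rw [hW, if_neg (by omega), if_neg (by omega)]
      have hka : W k a ≤ -1 + ε := by
        rw [hW]
        split_ifs with h h
        · exact absurd h (by omega)
        · exact le_rfl
        · linarith
      have := hkey (W k a) (-1-δ) hka le_rfl
      rw [hkb, hkcc]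
      linarith
    · have hka : W k a = -1 - δ := by rw [hW, if_neg (by omega), if_neg (by omega)]
      have hkcc : W k cc ≤ -1 + ε := by
        rw [hW]
        split_ifs with h h
        · exact absurd h (by omega)
        · exact le_rfl
        · linarith
      have := hkey (W k cc) (-1-δ) hkcc le_rfl
      rw [hkb, hka]
      linarith
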